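/- For all natural numbers m, n and every complex number a, one has (a-n)_m = (a)_m + ∑_{k=1}^{m} ∑_{l=1}^{min(k,n)} (-1)^k · ((k-1)!)/((l-1)! · l! · (k-l)!) · (m!/(m-k)!) · (n!/(n-l)!) · (a+k)_{m-k}, where (x)_j = x(x+1)...(x+j-1) is the Pochhammer symbol. -/

import Mathlib

open Finset

/-- Pochhammer symbol (rising factorial): `(a)_k = a (a+1) ⋯ (a+k-1)`. -/
noncomputable def poch (a : ℂ) (k : ℕ) : ℂ := ∏ j ∈ Finset.range k, (a + j)

lemma poch_zero (a : ℂ) : poch a 0 = 1 := by simp [poch]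

lemma poch_succ (b : ℂ) (j : ℕ) : poch b (j + 1) = b * poch (b + 1) j := by
  unfold poch
  rw [Finset.prod_range_succ', mul_comm]
  congr 1
  · push_cast; ring
  · exact Finset.prod_congr rfl fun i _ => by push_cast; ring

lemma multichoose_rec (n k : ℕ) :
    (k + 1) * Nat.multichoose n (k + 1) = (n + k) * Nat.multichoose n k := by
  cases n with
  | zero =>
    cases k with
    | zero => simp [Nat.multichoose_zero_succ]
    | succ k => simp [Nat.multichoose_zero_succ]
  | succ n =>
    rw [Nat.multichoose_eq, Nat.multichoose_eq]
    rw [show n + 1 + (k + 1) - 1 = (n + k) + 1 from by omega,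
      show n + 1 + k - 1 = n + k from by omega]
    calc (k + 1) * (n + k + 1).choose (k + 1)
        = (n + k + 1).choose (k + 1) * (k + 1) := mul_comm _ _
      _ = (n + k).succ.choose k.succ * k.succ := rfl
      _ = (n + k).succ * (n + k).choose k := (Nat.add_one_mul_choose_eq _ _).symm
      _ = (n + 1 + k) * (n + k).choose k := by
          rw [show (n + k).succ = n + 1 + k from by omega]

lemma descFactorial_rec (m k : ℕ) :
    (m + 1).descFactorial (k + 1)
      = m.descFactorial (k + 1) + (k + 1) * m.descFactorial k := by
  rw [Nat.succ_descFactorial_succ, Nat.descFactorial_succ]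
  rcases le_or_gt k m with h | h
  · have : m + 1 = (m - k) + (k + 1) := by omega
    rw [this, add_mul]
  · rw [Nat.descFactorial_eq_zero_iff_lt.mpr h]
    simp

lemma coeff_rec (m n k : ℕ) :
    (m + 1).descFactorial (k + 1) * Nat.multichoose n (k + 1)
      = m.descFactorial (k + 1) * Nat.multichoose n (k + 1)
        + (n + k) * (m.descFactorial k * Nat.multichoose n k) := by
  rw [descFactorial_rec, add_mul]
  congr 1
  calc (k + 1) * m.descFactorial k * Nat.multichoose n (k + 1)
      = m.descFactorial k * ((k + 1) * Nat.multichoose n (k + 1)) := by ring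
    _ = m.descFactorial k * ((n + k) * Nat.multichoose n k) := by rw [multichoose_rec]
    _ = (n + k) * (m.descFactorial k * Nat.multichoose n k) := by ring

lemma sum_choose_eq (n k : ℕ) (hk : 1 ≤ k) :
    ∑ l ∈ Finset.Icc 1 (min k n), (k - 1).choose (l - 1) * n.choose l
      = Nat.multichoose n k := by
  have main : Nat.multichoose n k
      = ∑ j ∈ Finset.range (k + 1), (k - 1).choose (k - j) * n.choose j := by
    rw [Nat.multichoose_eq, show n + k - 1 = (k - 1) + n from by omega,
      Nat.add_choose_eq, Finset.Nat.sum_antidiagonal_eq_sum_range_succ_mk,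
      ← Finset.sum_range_reflect]
    refine Finset.sum_congr rfl fun j hj => ?_
    simp only [Finset.mem_range] at hj
    rw [show k + 1 - 1 - j = k - j from by omega, show k - (k - j) = j from by omega]
  calc ∑ l ∈ Finset.Icc 1 (min k n), (k - 1).choose (l - 1) * n.choose l
      = ∑ l ∈ Finset.Icc 1 (min k n), (k - 1).choose (k - l) * n.choose l := by
        refine Finset.sum_congr rfl fun l hl => ?_
        simp only [Finset.mem_Icc, le_min_iff] at hl
        rw [← Nat.choose_symm (show l - 1 ≤ k - 1 from by omega),
          show k - 1 - (l - 1) = k - l from by omega]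
    _ = ∑ j ∈ Finset.range (k + 1), (k - 1).choose (k - j) * n.choose j := by
        refine Finset.sum_subset (fun x hx => ?_) (fun x hx hx' => ?_)
        · simp only [Finset.mem_Icc, le_min_iff, Finset.mem_range] at *
          omega
        · simp only [Finset.mem_range] at hx
          simp only [Finset.mem_Icc, le_min_iff, not_and, not_le] at hx'
          rcases Nat.eq_zero_or_pos x with h0 | h0
          · subst h0
            rw [Nat.choose_eq_zero_of_lt (show k - 1 < k - 0 from by omega)]
            ring
          · rw [Nat.choose_eq_zero_of_lt (show n < x from by omega)]
            ring
    _ = Nat.multichoose n k := main.symm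

lemma pochA (n : ℕ) : ∀ (m : ℕ) (a : ℂ), poch (a - n) m =
    ∑ k ∈ Finset.range (m + 1),
      (-1 : ℂ) ^ k * (m.descFactorial k : ℂ) * (Nat.multichoose n k : ℂ)
        * poch (a + k) (m - k) := by
  intro m
  induction m with
  | zero => intro a; simp [poch_zero]
  | succ m ih =>
    intro a
    rw [poch_succ, show a - (n : ℂ) + 1 = (a + 1) - n from by ring, ih (a + 1),
      Finset.mul_sum]
    have key : ∀ k ∈ Finset.range (m + 1),
        (a - (n : ℂ)) * ((-1 : ℂ) ^ k * (m.descFactorial k : ℂ)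
            * (Nat.multichoose n k : ℂ) * poch (a + 1 + k) (m - k))
        = (-1 : ℂ) ^ k * (m.descFactorial k : ℂ) * (Nat.multichoose n k : ℂ)
            * poch (a + k) (m + 1 - k)
          + (-1 : ℂ) ^ (k + 1) * (m.descFactorial k : ℂ)
            * (((n : ℂ) + k) * (Nat.multichoose n k : ℂ))
            * poch (a + ((k : ℕ) + 1 : ℕ)) (m + 1 - (k + 1)) := by
      intro k hk
      simp only [Finset.mem_range, Nat.lt_succ_iff] at hk
      rw [show m + 1 - k = (m - k) + 1 from by omega, poch_succ,
        show m + 1 - (k + 1) = m - k from by omega,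
        show a + 1 + (k : ℂ) = a + (k : ℂ) + 1 from by ring]
      push_cast
      ring_nf
    rw [Finset.sum_congr rfl key, Finset.sum_add_distrib]
    conv_rhs => rw [Finset.sum_range_succ']
    have hG : ∑ k ∈ Finset.range (m + 1),
        (-1 : ℂ) ^ k * (m.descFactorial k : ℂ) * (Nat.multichoose n k : ℂ)
          * poch (a + k) (m + 1 - k)
        = (∑ k ∈ Finset.range (m + 1),
            (-1 : ℂ) ^ (k + 1) * (m.descFactorial (k + 1) : ℂ)
              * (Nat.multichoose n (k + 1) : ℂ)
              * poch (a + ((k : ℕ) + 1 : ℕ)) (m + 1 - (k + 1)))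
          + (-1 : ℂ) ^ 0 * (m.descFactorial 0 : ℂ) * (Nat.multichoose n 0 : ℂ)
              * poch a (m + 1 - 0) := by
      have h := Finset.sum_range_succ'
        (fun k => (-1 : ℂ) ^ k * (m.descFactorial k : ℂ) * (Nat.multichoose n k : ℂ)
          * poch (a + k) (m + 1 - k)) (m + 1)
      beta_reduce at h
      rw [Finset.sum_range_succ, Nat.descFactorial_eq_zero_iff_lt.mpr (Nat.lt_succ_self m)]
        at h
      simp only [Nat.cast_zero, mul_zero, zero_mul, add_zero] at h
      exact h
    rw [hG]
    have hterm : ∀ k ∈ Finset.range (m + 1),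
        (-1 : ℂ) ^ (k + 1) * (((m + 1).descFactorial (k + 1) : ℕ) : ℂ)
            * (Nat.multichoose n (k + 1) : ℂ)
            * poch (a + ((k : ℕ) + 1 : ℕ)) (m + 1 - (k + 1))
        = (-1 : ℂ) ^ (k + 1) * (m.descFactorial (k + 1) : ℂ)
            * (Nat.multichoose n (k + 1) : ℂ)
            * poch (a + ((k : ℕ) + 1 : ℕ)) (m + 1 - (k + 1))
          + (-1 : ℂ) ^ (k + 1) * (m.descFactorial k : ℂ)
            * (((n : ℂ) + k) * (Nat.multichoose n k : ℂ))
            * poch (a + ((k : ℕ) + 1 : ℕ)) (m + 1 - (k + 1)) := by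
      intro k _
      have h : (((m + 1).descFactorial (k + 1) : ℕ) : ℂ) * (Nat.multichoose n (k + 1) : ℂ)
          = (m.descFactorial (k + 1) : ℂ) * (Nat.multichoose n (k + 1) : ℂ)
            + ((n : ℂ) + k) * ((m.descFactorial k : ℂ) * (Nat.multichoose n k : ℂ)) := by
        exact_mod_cast congrArg (Nat.cast : ℕ → ℂ) (coeff_rec m n k)
      linear_combination ((-1 : ℂ) ^ (k + 1)
        * poch (a + ((k : ℕ) + 1 : ℕ)) (m + 1 - (k + 1))) * h
    rw [Finset.sum_congr rfl hterm, Finset.sum_add_distrib]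
    simp only [Nat.descFactorial_zero, Nat.multichoose_zero_right, Nat.cast_one, pow_zero,
      one_mul, Nat.cast_zero, add_zero, Nat.sub_zero]
    ring

/-- Coefficientwise form of the decomposition of `Η₃`:
`(a-n)_m = (a)_m + ∑_{k=1}^m ∑_{l=1}^{min(k,n)} (-1)^k ((k-1)!/((l-1)! l! (k-l)!))
  (m!/(m-k)!) (n!/(n-l)!) (a+k)_{m-k}`. -/
theorem poch_shift_decomposition (m n : ℕ) (a : ℂ) :
    poch (a - n) m =
      poch a m +
        ∑ k ∈ Finset.Icc 1 m, ∑ l ∈ Finset.Icc 1 (min k n),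
          (-1 : ℂ) ^ k *
            (((k - 1).factorial : ℂ) /
              (((l - 1).factorial : ℂ) * (l.factorial : ℂ) * ((k - l).factorial : ℂ))) *
            ((m.factorial : ℂ) / ((m - k).factorial : ℂ)) *
            ((n.factorial : ℂ) / ((n - l).factorial : ℂ)) *
            poch (a + k) (m - k) := by
  have hins : Finset.range (m + 1) = insert 0 (Finset.Icc 1 m) := by
    ext x
    simp only [Finset.mem_range, Finset.mem_insert, Finset.mem_Icc]
    omega
  rw [pochA n m a, hins, Finset.sum_insert (by simp)]
  congr 1
  · simp [Nat.multichoose_zero_right]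
  · refine Finset.sum_congr rfl fun k hk => ?_
    simp only [Finset.mem_Icc] at hk
    have hterm : ∀ l ∈ Finset.Icc 1 (min k n),
        (-1 : ℂ) ^ k *
            (((k - 1).factorial : ℂ) /
              (((l - 1).factorial : ℂ) * (l.factorial : ℂ) * ((k - l).factorial : ℂ))) *
            ((m.factorial : ℂ) / ((m - k).factorial : ℂ)) *
            ((n.factorial : ℂ) / ((n - l).factorial : ℂ)) *
            poch (a + k) (m - k)
        = ((-1 : ℂ) ^ k * (m.descFactorial k : ℂ) * poch (a + k) (m - k))
            * (((k - 1).choose (l - 1) * n.choose l : ℕ) : ℂ) := by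
      intro l hl
      simp only [Finset.mem_Icc, le_min_iff] at hl
      have e1 : ((k - 1).factorial : ℂ)
          = ((k - 1).choose (l - 1) : ℂ) * ((l - 1).factorial : ℂ)
            * ((k - l).factorial : ℂ) := by
        have h := Nat.choose_mul_factorial_mul_factorial
          (show l - 1 ≤ k - 1 from by omega)
        rw [show k - 1 - (l - 1) = k - l from by omega] at h
        exact_mod_cast h.symm
      have e2 : (n.factorial : ℂ)
          = (n.choose l : ℂ) * (l.factorial : ℂ) * ((n - l).factorial : ℂ) := by
        exact_mod_cast (Nat.choose_mul_factorial_mul_factorial hl.2.2).symm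
      have e3 : (m.factorial : ℂ) = ((m - k).factorial : ℂ) * (m.descFactorial k : ℂ) := by
        exact_mod_cast (Nat.factorial_mul_descFactorial hk.2).symm
      have f1 : ((l - 1).factorial : ℂ) ≠ 0 := Nat.cast_ne_zero.mpr (Nat.factorial_ne_zero _)
      have f2 : (l.factorial : ℂ) ≠ 0 := Nat.cast_ne_zero.mpr (Nat.factorial_ne_zero _)
      have f3 : ((k - l).factorial : ℂ) ≠ 0 := Nat.cast_ne_zero.mpr (Nat.factorial_ne_zero _)
      have f4 : ((m - k).factorial : ℂ) ≠ 0 := Nat.cast_ne_zero.mpr (Nat.factorial_ne_zero _)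
      have f5 : ((n - l).factorial : ℂ) ≠ 0 := Nat.cast_ne_zero.mpr (Nat.factorial_ne_zero _)
      rw [e1, e2, e3]
      push_cast
      field_simp
    rw [Finset.sum_congr rfl hterm, ← Finset.mul_sum, ← Nat.cast_sum,
      sum_choose_eq n k hk.1]
    ring
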